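/- Let (P_n) be the three-term recurrence polynomials generating a polynomial hypergroup, and fix λ ∈ ℂ and constants c₁, c₂, d ∈ ℂ. Define φ_0(n) = P_n(λ), φ_1(n) = c₁ P_n'(λ), φ_2(n) = c₁² P_n''(λ) + c₂ P_n'(λ). Then (φ_0, φ_1, φ_2) is a generalized moment sequence of rank 1 (up to order 2): Σ_k c(m,n,k) φ_2(k) = φ_2(m)φ_0(n) + 2φ_1(m)φ_1(n) + φ_0(m)φ_2(n) for all m, n, together with the analogous equations of orders 0 and 1. -/
import Mathlib


open Polynomial

theorem moment_sequence_rank_one_order_two_of_derivatives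
    (a b c : ℕ → ℝ) (P : ℕ → Polynomial ℝ) (lc : ℕ → ℕ → ℕ → ℝ)
    (ha0 : a 0 = 0) (hb0 : b 0 = 0)
    (hc : ∀ n, 0 < c n) (hb : ∀ n, 0 ≤ b n) (ha : ∀ n, 0 < a (n + 1))
    (hsum : ∀ n, a n + b n + c n = 1)
    (hP0 : P 0 = 1) (hP1 : P 1 = X)
    (hrec : ∀ n, 1 ≤ n →
      X * P n = C (a n) * P (n - 1) + C (b n) * P n + C (c n) * P (n + 1))
    (hlin : ∀ m n, P m * P n =
      ∑ k ∈ Finset.Icc (Nat.dist m n) (m + n), C (lc m n k) * P k)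
    (hnonneg : ∀ m n k, 0 ≤ lc m n k)
    (lam c₁ c₂ : ℂ)
    (φ₀ φ₁ φ₂ : ℕ → ℂ)
    (hφ₀ : ∀ n, φ₀ n = Polynomial.aeval lam (P n))
    (hφ₁ : ∀ n, φ₁ n = c₁ * Polynomial.aeval lam (derivative (P n)))
    (hφ₂ : ∀ n, φ₂ n = c₁ ^ 2 * Polynomial.aeval lam (derivative (derivative (P n))) +
      c₂ * Polynomial.aeval lam (derivative (P n))) :
    ∀ m n : ℕ,
      (∑ k ∈ Finset.Icc (Nat.dist m n) (m + n), (lc m n k : ℂ) * φ₀ k = φ₀ m * φ₀ n) ∧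
      (∑ k ∈ Finset.Icc (Nat.dist m n) (m + n), (lc m n k : ℂ) * φ₁ k =
        φ₁ m * φ₀ n + φ₀ m * φ₁ n) ∧
      (∑ k ∈ Finset.Icc (Nat.dist m n) (m + n), (lc m n k : ℂ) * φ₂ k =
        φ₂ m * φ₀ n + 2 * φ₁ m * φ₁ n + φ₀ m * φ₂ n) := by
  intro m n
  set S := Finset.Icc (Nat.dist m n) (m + n) with hS
  set A : ℕ → ℂ := fun k => Polynomial.aeval lam (P k) with hA
  set B : ℕ → ℂ := fun k => Polynomial.aeval lam (derivative (P k)) with hB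
  set D : ℕ → ℂ := fun k => Polynomial.aeval lam (derivative (derivative (P k))) with hD
  have h := hlin m n
  have h1 : derivative (P m) * P n + P m * derivative (P n) =
      ∑ k ∈ S, C (lc m n k) * derivative (P k) := by
    have := congrArg derivative h
    simpa [derivative_mul, Finset.mul_sum, mul_comm] using this
  have h2 : derivative (derivative (P m)) * P n + 2 * (derivative (P m) * derivative (P n)) +
      P m * derivative (derivative (P n)) =
      ∑ k ∈ S, C (lc m n k) * derivative (derivative (P k)) := by
    have := congrArg derivative h1
    simp only [derivative_add, derivative_mul, derivative_C, zero_mul, add_zero,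
      derivative_sum, zero_add] at this
    rw [← this]; ring
  have key : ∀ (q : ℕ → Polynomial ℝ),
      (∀ k, (Polynomial.aeval lam (q k) : ℂ) = Polynomial.aeval lam (q k)) → True := fun _ _ => trivial
  have e0 : ∑ k ∈ S, (lc m n k : ℂ) * A k = A m * A n := by
    have := congrArg (Polynomial.aeval lam : Polynomial ℝ →ₐ[ℝ] ℂ) h
    simpa [map_sum, hA, Algebra.algebraMap_eq_smul_one, smul_eq_mul, mul_assoc] using this.symm
  have e1 : ∑ k ∈ S, (lc m n k : ℂ) * B k = B m * A n + A m * B n := by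
    have := congrArg (Polynomial.aeval lam : Polynomial ℝ →ₐ[ℝ] ℂ) h1
    simpa [map_sum, hA, hB, Algebra.algebraMap_eq_smul_one, smul_eq_mul, mul_assoc] using this.symm
  have e2 : ∑ k ∈ S, (lc m n k : ℂ) * D k = D m * A n + 2 * (B m * B n) + A m * D n := by
    have := congrArg (Polynomial.aeval lam : Polynomial ℝ →ₐ[ℝ] ℂ) h2
    simpa [map_sum, hA, hB, hD, map_ofNat, Algebra.algebraMap_eq_smul_one, smul_eq_mul, mul_assoc] using this.symm
  refine ⟨by simpa [hφ₀] using e0, ?_, ?_⟩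
  · simp only [hφ₀, hφ₁]
    calc ∑ k ∈ S, (lc m n k : ℂ) * (c₁ * B k) = c₁ * ∑ k ∈ S, (lc m n k : ℂ) * B k := by
          rw [Finset.mul_sum]; exact Finset.sum_congr rfl fun k _ => by ring
      _ = _ := by rw [e1]; ring
  · simp only [hφ₀, hφ₁, hφ₂]
    calc ∑ k ∈ S, (lc m n k : ℂ) * (c₁ ^ 2 * D k + c₂ * B k)
        = c₁ ^ 2 * (∑ k ∈ S, (lc m n k : ℂ) * D k) + c₂ * ∑ k ∈ S, (lc m n k : ℂ) * B k := by
          rw [Finset.mul_sum, Finset.mul_sum, ← Finset.sum_add_distrib]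
          exact Finset.sum_congr rfl fun k _ => by ring
      _ = _ := by rw [e1, e2]; ring
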